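/- Fix k > 0 and c ≠ 0. For every v in the Sobolev space H¹([-1,1]) and every ε > 0 small enough (depending only on k and a universal Sobolev constant, not on c), the quadratic form Q(v) = ∫_{-1}^{1} ( |v'(s)|² + (k² - ε s/(c² + s²)) |v(s)|² ) ds satisfies Q(v) ≥ 0, with Q(v) > 0 unless v = 0. -/

import Mathlib

open Set

open intervalIntegral

/-- Cauchy-Schwarz for interval integrals of a continuous function against 1. -/
private lemma qf_cs {a b : ℝ} (hab : a ≤ b) {g : ℝ → ℝ} (hg : Continuous g) :
    (∫ x in a..b, g x) ^ 2 ≤ (b - a) * ∫ x in a..b, g x ^ 2 := by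
  rcases eq_or_lt_of_le hab with rfl | h
  · simp
  · have hba : (0:ℝ) < b - a := by linarith
    set G := ∫ x in a..b, g x with hG
    set t := G / (b - a) with ht
    have i1 : IntervalIntegrable (fun x => g x ^ 2) MeasureTheory.volume a b :=
      (hg.pow 2).intervalIntegrable _ _
    have i2 : IntervalIntegrable (fun x => 2 * t * g x) MeasureTheory.volume a b :=
      (continuous_const.mul hg).intervalIntegrable _ _
    have h0 : 0 ≤ ∫ x in a..b, (g x - t) ^ 2 :=
      intervalIntegral.integral_nonneg hab (fun x _ => sq_nonneg _)
    have hexp : (∫ x in a..b, (g x - t) ^ 2)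
        = (∫ x in a..b, g x ^ 2) - 2 * t * G + (b - a) * t ^ 2 := by
      have e : (fun x => (g x - t) ^ 2) = fun x => (g x ^ 2 - 2 * t * g x) + t ^ 2 := by
        funext x; ring
      rw [e, intervalIntegral.integral_add (i1.sub i2) intervalIntegrable_const,
        intervalIntegral.integral_sub i1 i2, intervalIntegral.integral_const_mul,
        intervalIntegral.integral_const, smul_eq_mul]
    have htG : t * (b - a) = G := by rw [ht]; field_simp [hba.ne']
    have key : 2 * t * G - (b - a) * t ^ 2 ≤ ∫ x in a..b, g x ^ 2 := by linarith
    have key2 := mul_le_mul_of_nonneg_left key hba.le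
    have h2 : (b - a) * (2 * t * G - (b - a) * t ^ 2) = G ^ 2 := by
      rw [← htG]; ring
    linarith

/-- The odd function integrates to zero. -/
private lemma qf_odd (c : ℝ) (hc : c ≠ 0) : ∫ s in (-1:ℝ)..1, s / (c^2 + s^2) = 0 := by
  have h : ∀ s ∈ uIcc (-1:ℝ) 1,
      HasDerivAt (fun t => Real.log (c^2 + t^2) / 2) (s / (c^2 + s^2)) s := by
    intro s _
    have h1 : (0:ℝ) < c^2 + s^2 := by positivity
    have := ((Real.hasDerivAt_log h1.ne').comp s
      (((hasDerivAt_id s).pow 2).const_add (c^2))).div_const 2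
    refine this.congr_deriv ?_
    simp only [id]
    field_simp
    ring
  rw [integral_eq_sub_of_hasDerivAt h
    (by apply Continuous.intervalIntegrable; fun_prop (disch := intro x; positivity))]
  norm_num

/-- Fix k > 0 and c ≠ 0. For every C¹ function v : [-1,1] → ℂ and every ε > 0 small
enough (depending only on k, not on c), the quadratic form
Q(v) = ∫_{-1}^{1} (|v'(s)|² + (k² - ε s/(c² + s²)) |v(s)|²) ds
satisfies Q(v) ≥ 0, with Q(v) > 0 unless v = 0 on [-1,1]. -/
theorem quadratic_form_positive (k : ℝ) (hk : 0 < k) :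
    ∃ ε₀ > (0 : ℝ), ∀ ε : ℝ, 0 < ε → ε < ε₀ → ∀ c : ℝ, c ≠ 0 →
      ∀ v : ℝ → ℂ, ContDiff ℝ 1 v →
        (0 ≤ ∫ s in (-1 : ℝ)..1,
            (‖deriv v s‖ ^ 2 + (k ^ 2 - ε * s / (c ^ 2 + s ^ 2)) * ‖v s‖ ^ 2)) ∧
        ((∃ s ∈ Icc (-1 : ℝ) 1, v s ≠ 0) →
          0 < ∫ s in (-1 : ℝ)..1,
            (‖deriv v s‖ ^ 2 + (k ^ 2 - ε * s / (c ^ 2 + s ^ 2)) * ‖v s‖ ^ 2)) := by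
  refine ⟨min 1 (k^2) / 9, by positivity, ?_⟩
  intro ε hε hεlt c hc v hv
  have hk2 : (0:ℝ) < k ^ 2 := by positivity
  have hε1 : 8 * ε < 1 := by
    have := min_le_left 1 (k^2); linarith
  have hε2 : 8 * ε < k ^ 2 := by
    have := min_le_right 1 (k^2); linarith
  -- basic continuity facts
  have hvc : Continuous v := hv.continuous
  have hvd : Continuous (deriv v) := hv.continuous_deriv le_rfl
  have hden : ∀ s : ℝ, (0:ℝ) < c ^ 2 + s ^ 2 := fun s => by positivity
  set g : ℝ → ℝ := fun s => ‖v s‖ ^ 2 with hgdef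
  have hgc : Continuous g := hvc.norm.pow 2
  set φ : ℝ → ℝ := fun s => 2 * (inner ℝ (v s) (deriv v s) : ℝ) with hφdef
  have hφ : ∀ s, HasDerivAt g (φ s) s := fun s =>
    ((hv.differentiable one_ne_zero) s).hasDerivAt.norm_sq
  have hφc : Continuous φ := continuous_const.mul (hvc.inner hvd)
  have hφbd : ∀ s, |φ s| ≤ g s + ‖deriv v s‖ ^ 2 := by
    intro s
    have h1 := abs_real_inner_le_norm (v s) (deriv v s)
    have h2 : |φ s| = 2 * |(inner ℝ (v s) (deriv v s) : ℝ)| := by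
      rw [hφdef]; rw [abs_mul, abs_two]
    have h3 : g s = ‖v s‖ ^ 2 := rfl
    nlinarith [sq_nonneg (‖v s‖ - ‖deriv v s‖), norm_nonneg (v s), norm_nonneg (deriv v s)]
  have hftc : ∀ x y : ℝ, (∫ t in x..y, φ t) = g y - g x := fun x y =>
    integral_eq_sub_of_hasDerivAt (fun t _ => hφ t) (hφc.intervalIntegrable _ _)
  set D := ∫ s in (-1:ℝ)..1, ‖deriv v s‖ ^ 2 with hDdef
  set N := ∫ s in (-1:ℝ)..1, g s with hNdef
  have hD : 0 ≤ D := intervalIntegral.integral_nonneg (by norm_num) (fun x _ => sq_nonneg _)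
  have hN : 0 ≤ N := intervalIntegral.integral_nonneg (by norm_num) (fun x _ => sq_nonneg _)
  -- ∫ |φ| ≤ N + D
  have habsφ : (∫ s in (-1:ℝ)..1, |φ s|) ≤ N + D := by
    have hmono : (∫ s in (-1:ℝ)..1, |φ s|) ≤ ∫ s in (-1:ℝ)..1, (g s + ‖deriv v s‖ ^ 2) :=
      intervalIntegral.integral_mono_on (by norm_num) (hφc.abs.intervalIntegrable _ _)
        ((hgc.add (hvd.norm.pow 2)).intervalIntegrable _ _) (fun x _ => hφbd x)
    rwa [intervalIntegral.integral_add (f := fun x => g x) (g := fun x => ‖deriv v x‖ ^ 2)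
      (hgc.intervalIntegrable _ _)
      ((hvd.norm.pow 2).intervalIntegrable _ _)] at hmono
  -- |g y - g x| ≤ N + D for x,y in [-1,1]
  have hdiff : ∀ x y : ℝ, x ∈ Icc (-1:ℝ) 1 → y ∈ Icc (-1:ℝ) 1 → |g y - g x| ≤ N + D := by
    have key : ∀ x y : ℝ, x ∈ Icc (-1:ℝ) 1 → y ∈ Icc (-1:ℝ) 1 → x ≤ y →
        |g y - g x| ≤ N + D := by
      intro x y hx hy hxy
      rw [← hftc x y]
      calc |∫ t in x..y, φ t| ≤ ∫ t in x..y, |φ t| :=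
            intervalIntegral.abs_integral_le_integral_abs hxy
        _ ≤ ∫ s in (-1:ℝ)..1, |φ s| :=
            intervalIntegral.integral_mono_interval hx.1 hxy hy.2
              (Filter.Eventually.of_forall (fun t => abs_nonneg _))
              (hφc.abs.intervalIntegrable _ _)
        _ ≤ N + D := habsφ
    intro x y hx hy
    rcases le_total x y with h | h
    · exact key x y hx hy h
    · rw [abs_sub_comm]; exact key y x hy hx h
  -- pointwise bound on ‖v‖
  have hgB : ∀ t ∈ Icc (-1:ℝ) 1, g t ≤ 2 * N + D := by
    intro t ht
    have h1 : ∀ τ ∈ Icc (-1:ℝ) 1, g t ≤ g τ + (N + D) := by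
      intro τ hτ
      have := hdiff τ t hτ ht
      have h2 := le_abs_self (g t - g τ)
      linarith
    have h2 : (∫ τ in (-1:ℝ)..1, g t) ≤ ∫ τ in (-1:ℝ)..1, (g τ + (N + D)) :=
      intervalIntegral.integral_mono_on (by norm_num) intervalIntegrable_const
        ((hgc.add continuous_const).intervalIntegrable _ _) h1
    rw [intervalIntegral.integral_const,
      intervalIntegral.integral_add (hgc.intervalIntegrable _ _) intervalIntegrable_const,
      intervalIntegral.integral_const, smul_eq_mul, smul_eq_mul] at h2
    norm_num at h2
    linarith
  set B := Real.sqrt (2 * N + D) with hBdef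
  have hBnn : 0 ≤ B := Real.sqrt_nonneg _
  have hB2 : B ^ 2 = 2 * N + D := Real.sq_sqrt (by linarith)
  have hvB : ∀ t ∈ Icc (-1:ℝ) 1, ‖v t‖ ≤ B := by
    intro t ht
    rw [← Real.sqrt_sq (norm_nonneg (v t))]
    exact Real.sqrt_le_sqrt (hgB t ht)
  -- Cauchy-Schwarz bound on ∫ ‖v'‖
  have hphi : ∀ x y : ℝ, x ∈ Icc (-1:ℝ) 1 → y ∈ Icc (-1:ℝ) 1 → x ≤ y →
      (∫ t in x..y, ‖deriv v t‖) ≤ Real.sqrt (y - x) * Real.sqrt D := by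
    intro x y hx hy hxy
    have hcs2 := qf_cs hxy hvd.norm
    have hDsub : (∫ t in x..y, ‖deriv v t‖ ^ 2) ≤ D :=
      intervalIntegral.integral_mono_interval hx.1 hxy hy.2
        (Filter.Eventually.of_forall (fun t => sq_nonneg _))
        ((hvd.norm.pow 2).intervalIntegrable _ _)
    have hInn : 0 ≤ ∫ t in x..y, ‖deriv v t‖ :=
      intervalIntegral.integral_nonneg hxy (fun u _ => norm_nonneg _)
    have h3 : (∫ t in x..y, ‖deriv v t‖) ^ 2 ≤ (y - x) * D := by
      nlinarith [hcs2, hDsub]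
    rw [← Real.sqrt_mul (by linarith) D, ← Real.sqrt_sq hInn]
    exact Real.sqrt_le_sqrt h3
  -- |g y - g x| ≤ 2B √(y-x) √D
  have hw2 : ∀ x y : ℝ, x ∈ Icc (-1:ℝ) 1 → y ∈ Icc (-1:ℝ) 1 → x ≤ y →
      |g y - g x| ≤ 2 * B * (Real.sqrt (y - x) * Real.sqrt D) := by
    intro x y hx hy hxy
    rw [← hftc x y]
    have step2 : (∫ t in x..y, |φ t|) ≤ ∫ t in x..y, 2 * B * ‖deriv v t‖ := by
      apply intervalIntegral.integral_mono_on hxy (hφc.abs.intervalIntegrable _ _)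
        ((continuous_const.mul hvd.norm).intervalIntegrable _ _)
      intro t ht
      have hmem : t ∈ Icc (-1:ℝ) 1 := ⟨le_trans hx.1 ht.1, le_trans ht.2 hy.2⟩
      have h1 := abs_real_inner_le_norm (v t) (deriv v t)
      have h2 := hvB t hmem
      have h3 : |φ t| = 2 * |(inner ℝ (v t) (deriv v t) : ℝ)| := by
        rw [hφdef]; rw [abs_mul, abs_two]
      show |φ t| ≤ 2 * B * ‖deriv v t‖
      nlinarith [norm_nonneg (deriv v t), norm_nonneg (v t)]
    have step3 : (∫ t in x..y, 2 * B * ‖deriv v t‖) = 2 * B * ∫ t in x..y, ‖deriv v t‖ :=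
      intervalIntegral.integral_const_mul _ _
    have step4 := hphi x y hx hy hxy
    calc |∫ t in x..y, φ t| ≤ ∫ t in x..y, |φ t| :=
          intervalIntegral.abs_integral_le_integral_abs hxy
      _ ≤ 2 * B * ∫ t in x..y, ‖deriv v t‖ := by rw [← step3]; exact step2
      _ ≤ 2 * B * (Real.sqrt (y - x) * Real.sqrt D) := by
          apply mul_le_mul_of_nonneg_left step4 (by linarith)
  have hwbd : ∀ s ∈ Icc (-1:ℝ) 1, |g s - g 0| ≤ 2 * B * (Real.sqrt |s| * Real.sqrt D) := by
    intro s hs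
    have h0m : (0:ℝ) ∈ Icc (-1:ℝ) 1 := by norm_num
    rcases le_total 0 s with h0s | hs0
    · have h := hw2 0 s h0m hs h0s
      rw [sub_zero] at h
      rwa [abs_of_nonneg h0s]
    · have h := hw2 s 0 hs h0m hs0
      simp only [zero_sub] at h
      rw [abs_sub_comm, abs_of_nonpos hs0]
      exact h
  -- the weight function
  set f₀ : ℝ → ℝ := fun s => s / (c ^ 2 + s ^ 2) with hf₀def
  have hf₀c : Continuous f₀ :=
    continuous_id.div (continuous_const.add (continuous_pow 2)) (fun s => (hden s).ne')
  have hodd : (∫ s in (-1:ℝ)..1, f₀ s) = 0 := qf_odd c hc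
  set J := ∫ s in (-1:ℝ)..1, f₀ s * g s with hJdef
  have hsplit : J = ∫ s in (-1:ℝ)..1, f₀ s * (g s - g 0) := by
    have e : EqOn (fun s => f₀ s * g s) (fun s => f₀ s * (g s - g 0) + g 0 * f₀ s)
        (uIcc (-1:ℝ) 1) := fun s _ => by ring
    rw [hJdef, intervalIntegral.integral_congr e,
      intervalIntegral.integral_add (f := fun s => f₀ s * (g s - g 0)) (g := fun s => g 0 * f₀ s)
        ((hf₀c.mul (hgc.sub continuous_const)).intervalIntegrable _ _)
        ((continuous_const.mul hf₀c).intervalIntegrable _ _),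
      intervalIntegral.integral_const_mul, hodd, mul_zero, add_zero]
  -- integrability of |s|^(-1/2)
  have habsint : IntervalIntegrable (fun s : ℝ => |s| ^ (-(1/2) : ℝ))
      MeasureTheory.volume 0 1 := by
    apply (intervalIntegrable_rpow' (by norm_num : (-1:ℝ) < -(1/2))).congr
    intro x hx
    rw [uIoc_of_le (by norm_num : (0:ℝ) ≤ 1)] at hx
    show x ^ (-(1/2) : ℝ) = |x| ^ (-(1/2) : ℝ)
    rw [abs_of_pos hx.1]
  have habsintneg : IntervalIntegrable (fun s : ℝ => |s| ^ (-(1/2) : ℝ))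
      MeasureTheory.volume (-1) 0 := by
    have := (IntervalIntegrable.iff_comp_neg).mp habsint.symm
    simp only [abs_neg, neg_zero] at this
    exact this
  have habsint2 : IntervalIntegrable (fun s : ℝ => |s| ^ (-(1/2) : ℝ))
      MeasureTheory.volume (-1) 1 := habsintneg.trans habsint
  -- value of ∫ |s|^(-1/2)
  have hval : (∫ s in (-1:ℝ)..1, |s| ^ (-(1/2) : ℝ)) = 4 := by
    have hpos : (∫ s in (0:ℝ)..1, |s| ^ (-(1/2) : ℝ)) = 2 := by
      have e : EqOn (fun s : ℝ => |s| ^ (-(1/2) : ℝ)) (fun s : ℝ => s ^ (-(1/2) : ℝ))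
          (uIcc (0:ℝ) 1) := by
        intro x hx
        rw [uIcc_of_le (by norm_num : (0:ℝ) ≤ 1)] at hx
        simp only
        rw [abs_of_nonneg hx.1]
      rw [intervalIntegral.integral_congr e,
        integral_rpow (Or.inl (by norm_num : (-1:ℝ) < -(1/2)))]
      rw [show (-(1/2) : ℝ) + 1 = 1/2 by norm_num, Real.one_rpow,
        Real.zero_rpow (by norm_num : (1/2:ℝ) ≠ 0)]
      norm_num
    have hneg : (∫ s in (-1:ℝ)..0, |s| ^ (-(1/2) : ℝ)) = 2 := by
      have := intervalIntegral.integral_comp_neg (a := 0) (b := 1)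
        (fun s : ℝ => |s| ^ (-(1/2) : ℝ))
      simp only [abs_neg, neg_zero] at this
      rw [← this]
      exact hpos
    have := intervalIntegral.integral_add_adjacent_intervals
      (a := (-1:ℝ)) (b := 0) (c := 1) habsintneg habsint
    rw [← this, hpos, hneg]
    norm_num
  -- pointwise bound for the weighted integrand
  have hpw : ∀ s ∈ Icc (-1:ℝ) 1,
      |f₀ s * (g s - g 0)| ≤ 2 * B * Real.sqrt D * |s| ^ (-(1/2) : ℝ) := by
    intro s hs
    rcases eq_or_ne s 0 with rfl | hs0
    · have : f₀ 0 = 0 := by rw [hf₀def]; simp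
      rw [this, zero_mul, abs_zero,
        Real.zero_rpow (by norm_num : (-(1/2):ℝ) ≠ 0), mul_zero]
    · have habspos : 0 < |s| := abs_pos.mpr hs0
      have e1 : |f₀ s| ≤ |s|⁻¹ := by
        have hfs : |f₀ s| = |s| / (c ^ 2 + s ^ 2) := by
          rw [hf₀def]
          show |s / (c ^ 2 + s ^ 2)| = _
          rw [abs_div, abs_of_pos (hden s)]
        have h1 : s ^ 2 ≤ c ^ 2 + s ^ 2 := by nlinarith [sq_nonneg c]
        have hs2 : (0:ℝ) < s ^ 2 := by positivity
        have h2 : |s| / (c ^ 2 + s ^ 2) ≤ |s| / s ^ 2 := by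
          gcongr
        have h3 : |s| / s ^ 2 = |s|⁻¹ := by
          rw [← sq_abs, sq, ← div_div, div_self habspos.ne']
          exact one_div _
        rw [hfs]; linarith
      have e2 : |s|⁻¹ * Real.sqrt |s| = |s| ^ (-(1/2) : ℝ) := by
        have hinv : |s|⁻¹ = |s| ^ (-1 : ℝ) := by
          rw [Real.rpow_neg (abs_nonneg s), Real.rpow_one]
        rw [hinv, Real.sqrt_eq_rpow, ← Real.rpow_add habspos]
        norm_num
      calc |f₀ s * (g s - g 0)| = |f₀ s| * |g s - g 0| := abs_mul _ _
        _ ≤ |s|⁻¹ * (2 * B * (Real.sqrt |s| * Real.sqrt D)) :=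
            mul_le_mul e1 (hwbd s hs) (abs_nonneg _) (by positivity)
        _ = 2 * B * Real.sqrt D * (|s|⁻¹ * Real.sqrt |s|) := by ring
        _ = 2 * B * Real.sqrt D * |s| ^ (-(1/2) : ℝ) := by rw [e2]
  -- bound on J
  have hJb : |J| ≤ 8 * (N + D) := by
    have h1 : |J| ≤ ∫ s in (-1:ℝ)..1, |f₀ s * (g s - g 0)| := by
      rw [hsplit]
      exact intervalIntegral.abs_integral_le_integral_abs (by norm_num)
    have h2 : (∫ s in (-1:ℝ)..1, |f₀ s * (g s - g 0)|)
        ≤ ∫ s in (-1:ℝ)..1, 2 * B * Real.sqrt D * |s| ^ (-(1/2) : ℝ) :=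
      intervalIntegral.integral_mono_on (by norm_num)
        ((hf₀c.mul (hgc.sub continuous_const)).abs.intervalIntegrable _ _)
        (habsint2.const_mul _) hpw
    have h3 : (∫ s in (-1:ℝ)..1, 2 * B * Real.sqrt D * |s| ^ (-(1/2) : ℝ))
        = 2 * B * Real.sqrt D * 4 := by
      rw [intervalIntegral.integral_const_mul, hval]
    have hsD : Real.sqrt D ^ 2 = D := Real.sq_sqrt hD
    have hsDnn := Real.sqrt_nonneg D
    have h4 : |J| ≤ 2 * B * Real.sqrt D * 4 := by linarith
    nlinarith [sq_nonneg (B - Real.sqrt D)]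
  -- splitting the quadratic form
  have hQ : (∫ s in (-1:ℝ)..1,
      (‖deriv v s‖ ^ 2 + (k ^ 2 - ε * s / (c ^ 2 + s ^ 2)) * ‖v s‖ ^ 2))
      = D + k ^ 2 * N - ε * J := by
    have e : EqOn (fun s => ‖deriv v s‖ ^ 2 + (k ^ 2 - ε * s / (c ^ 2 + s ^ 2)) * ‖v s‖ ^ 2)
        (fun s => (‖deriv v s‖ ^ 2 + k ^ 2 * g s) - ε * (f₀ s * g s)) (uIcc (-1:ℝ) 1) := by
      intro s _
      simp only [hf₀def, hgdef]
      ring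
    rw [intervalIntegral.integral_congr e,
      intervalIntegral.integral_sub (f := fun s => ‖deriv v s‖ ^ 2 + k ^ 2 * g s)
        (g := fun s => ε * (f₀ s * g s))
        (((hvd.norm.pow 2).add (continuous_const.mul hgc)).intervalIntegrable _ _)
        ((continuous_const.mul (hf₀c.mul hgc)).intervalIntegrable _ _),
      intervalIntegral.integral_add (f := fun s => ‖deriv v s‖ ^ 2) (g := fun s => k ^ 2 * g s)
        ((hvd.norm.pow 2).intervalIntegrable _ _)
        ((continuous_const.mul hgc).intervalIntegrable _ _),
      intervalIntegral.integral_const_mul, intervalIntegral.integral_const_mul]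
  clear_value g φ D N B f₀ J
  have h8 : ε * J ≤ 8 * ε * N + 8 * ε * D := by
    have := mul_le_mul_of_nonneg_left (le_trans (le_abs_self J) hJb) hε.le
    have e1 : ε * (8 * (N + D)) = 8 * ε * N + 8 * ε * D := by ring
    linarith
  have t1 : 0 ≤ (1 - 8 * ε) * D := mul_nonneg (by linarith) hD
  constructor
  · rw [hQ]
    have t2 : 0 ≤ (k ^ 2 - 8 * ε) * N := mul_nonneg (by linarith) hN
    have e2 : (1 - 8 * ε) * D = D - 8 * ε * D := by ring
    have e3 : (k ^ 2 - 8 * ε) * N = k ^ 2 * N - 8 * ε * N := by ring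
    linarith
  · rintro ⟨s₀, hs₀, hv₀⟩
    have hNpos : 0 < N := by
      rw [hNdef]
      simp only [hgdef]
      exact intervalIntegral.integral_pos (by norm_num) ((hvc.norm.pow 2).continuousOn)
        (fun x _ => sq_nonneg _) ⟨s₀, hs₀, pow_pos (norm_pos_iff.mpr hv₀) 2⟩
    rw [hQ]
    have t2 : 0 < (k ^ 2 - 8 * ε) * N := mul_pos (by linarith) hNpos
    have e2 : (1 - 8 * ε) * D = D - 8 * ε * D := by ring
    have e3 : (k ^ 2 - 8 * ε) * N = k ^ 2 * N - 8 * ε * N := by ring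
    linarith
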